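/- For every ω ∈ ℝ with 0 ≤ ω ≤ 1, the bond state ρ(ω) is separable (a finite convex combination of Kronecker products of single-qubit density matrices) if and only if ω ≤ √2 − 1. -/

import Mathlib

open Matrix Kronecker
open scoped ComplexOrder

noncomputable section

namespace ClusterState

/-- The single-qubit Pauli `X` matrix. -/
def PX : Matrix (Fin 2) (Fin 2) ℂ := !![0, 1; 1, 0]

/-- The single-qubit Pauli `Y` matrix. -/
def PY : Matrix (Fin 2) (Fin 2) ℂ := !![0, -Complex.I; Complex.I, 0]

/-- The single-qubit Pauli `Z` matrix. -/
def PZ : Matrix (Fin 2) (Fin 2) ℂ := !![1, 0; 0, -1]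

/-- The bond state `ρ(ω) = (1/4)(1 + ω X⊗Z)(1 + ω Z⊗X)`. -/
def bondState (ω : ℝ) : Matrix (Fin 2 × Fin 2) (Fin 2 × Fin 2) ℂ :=
  (4 : ℂ)⁻¹ • ((1 + ω • (PX ⊗ₖ PZ)) * (1 + ω • (PZ ⊗ₖ PX)))

/-- A two-qubit state is separable if it is a finite convex combination of
Kronecker products of single-qubit density matrices. -/
def IsSeparable (ρ : Matrix (Fin 2 × Fin 2) (Fin 2 × Fin 2) ℂ) : Prop :=
  ∃ (k : ℕ) (lam : Fin k → ℝ) (σ τ : Fin k → Matrix (Fin 2) (Fin 2) ℂ),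
    (∀ i, 0 ≤ lam i) ∧ (∑ i, lam i = 1) ∧
    (∀ i, (σ i)ᴴ = σ i ∧ (σ i).PosSemidef ∧ (σ i).trace = 1) ∧
    (∀ i, (τ i)ᴴ = τ i ∧ (τ i).PosSemidef ∧ (τ i).trace = 1) ∧
    ρ = ∑ i, lam i • (σ i ⊗ₖ τ i)

/-! ### Auxiliary lemmas -/

/-- Rank-one outer products are positive semidefinite. -/
lemma outer_psd (v : Fin 2 → ℂ) :
    (Matrix.of fun i j => v i * star (v j)).PosSemidef := by
  refine Matrix.PosSemidef.of_dotProduct_mulVec_nonneg ?_ fun x => ?_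
  · ext i j
    simp [Matrix.conjTranspose_apply, mul_comm]
  · have h : star x ⬝ᵥ ((Matrix.of fun i j => v i * star (v j)) *ᵥ x)
        = star (star v ⬝ᵥ x) * (star v ⬝ᵥ x) := by
      simp only [dotProduct, Matrix.mulVec, Fin.sum_univ_two, Matrix.of_apply,
        Pi.star_apply, star_add, StarMul.star_mul, star_star]
      ring
    rw [h]
    exact star_mul_self_nonneg _

/-- A nonnegative real multiple of a PSD matrix is PSD. -/
lemma psd_smul {n : Type*} [Fintype n] {M : Matrix n n ℂ} (hM : M.PosSemidef)
    {c : ℝ} (hc : 0 ≤ c) : ((c : ℂ) • M).PosSemidef := by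
  refine Matrix.PosSemidef.of_dotProduct_mulVec_nonneg ?_ fun x => ?_
  · ext i j
    simp [Matrix.conjTranspose_apply, Complex.conj_ofReal, hM.1.apply]
  · have h : star x ⬝ᵥ (((c : ℂ) • M) *ᵥ x) = (c : ℂ) * (star x ⬝ᵥ (M *ᵥ x)) := by
      rw [Matrix.smul_mulVec, dotProduct_smul, smul_eq_mul]
    rw [h]
    exact mul_nonneg (by exact_mod_cast Complex.zero_le_real.mpr hc) (hM.dotProduct_mulVec_nonneg x)

lemma psd_of_outer {M : Matrix (Fin 2) (Fin 2) ℂ} (c : ℝ) (hc : 0 ≤ c) (v : Fin 2 → ℂ)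
    (hM : M = (c : ℂ) • Matrix.of fun i j => v i * star (v j)) : M.PosSemidef :=
  hM ▸ psd_smul (outer_psd v) hc

/-- Conjugate transpose of a Kronecker product. -/
lemma kron_conjTranspose {A B : Matrix (Fin 2) (Fin 2) ℂ} :
    (A ⊗ₖ B)ᴴ = Aᴴ ⊗ₖ Bᴴ := by
  ext ⟨a, b⟩ ⟨c, d⟩
  simp [Matrix.conjTranspose_apply, Matrix.kroneckerMap_apply, mul_comm]

/-- Kronecker products of PSD matrices are PSD. -/
lemma kron_psd {A B : Matrix (Fin 2) (Fin 2) ℂ} (hA : A.PosSemidef) (hB : B.PosSemidef) :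
    (A ⊗ₖ B).PosSemidef := by
  exact hA.kronecker hB

/-- Partial transpose on the second factor. -/
def pt (M : Matrix (Fin 2 × Fin 2) (Fin 2 × Fin 2) ℂ) :
    Matrix (Fin 2 × Fin 2) (Fin 2 × Fin 2) ℂ :=
  Matrix.of fun p q => M (p.1, q.2) (q.1, p.2)

lemma real_smul_mat (r : ℝ) {m n : Type*} (M : Matrix m n ℂ) : r • M = (r : ℂ) • M := by
  ext i j; simp [Complex.real_smul]

lemma pauli_xz : PX * PZ = (-Complex.I) • PY := by
  ext i j
  fin_cases i <;> fin_cases j <;>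
    simp [PX, PY, PZ, Matrix.mul_apply, Fin.sum_univ_two, Complex.ext_iff]

lemma pauli_zx : PZ * PX = Complex.I • PY := by
  ext i j
  fin_cases i <;> fin_cases j <;>
    simp [PX, PY, PZ, Matrix.mul_apply, Fin.sum_univ_two, Complex.ext_iff]

lemma kron_xz_zx : (PX ⊗ₖ PZ) * (PZ ⊗ₖ PX) = PY ⊗ₖ PY := by
  rw [← Matrix.mul_kronecker_mul, pauli_xz, pauli_zx, Matrix.smul_kronecker,
    Matrix.kronecker_smul, smul_smul]
  simp [Complex.I_mul_I]

/-- Pauli expansion of the bond state. -/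
lemma bondState_eq (ω : ℝ) : bondState ω =
    (4:ℂ)⁻¹ • (1 + (ω:ℂ) • (PX ⊗ₖ PZ) + (ω:ℂ) • (PZ ⊗ₖ PX) + ((ω:ℂ)^2) • (PY ⊗ₖ PY)) := by
  rw [bondState, real_smul_mat, real_smul_mat]
  simp only [add_mul, mul_add, one_mul, mul_one, smul_mul_assoc, mul_smul_comm, smul_smul,
    kron_xz_zx]
  module

set_option maxHeartbeats 2000000 in
/-- for `0 ≤ ω ≤ 1` the bond state is separable iff `ω ≤ √2 − 1`. -/
theorem bondState_separable_iff (ω : ℝ) (h0 : 0 ≤ ω) (h1 : ω ≤ 1) :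
    IsSeparable (bondState ω) ↔ ω ≤ Real.sqrt 2 - 1 := by
  have hs2 : Real.sqrt 2 ^ 2 = 2 := Real.sq_sqrt (by norm_num)
  have hs2n : 0 ≤ Real.sqrt 2 := Real.sqrt_nonneg 2
  constructor
  · rintro ⟨k, lam, σ, τ, hlam0, hsum, hσ, hτ, hρ⟩
    -- the entanglement-witness vector
    set v : Fin 2 × Fin 2 → ℂ := fun p => if p = (0, 0) then 1 else -1 with hv
    -- value of the witness functional on the bond state
    have hval : star v ⬝ᵥ (pt (bondState ω) *ᵥ v) = ((1 - 2 * ω - ω ^ 2 : ℝ) : ℂ) := by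
      simp only [bondState, pt, dotProduct, Matrix.mulVec, Fintype.sum_prod_type,
        Fin.sum_univ_two, Matrix.of_apply, Matrix.smul_apply, Matrix.mul_apply,
        Matrix.add_apply, Matrix.one_apply, Matrix.kroneckerMap_apply, PX, PZ,
        Matrix.cons_val', Matrix.cons_val_zero, Matrix.cons_val_one, Matrix.head_cons,
        Matrix.head_fin_const, Matrix.empty_val', Matrix.cons_val_fin_one, hv,
        Pi.star_apply, smul_eq_mul, Prod.mk.injEq]
      norm_num [Prod.ext_iff, Prod.fst_zero, Prod.snd_zero]
      push_cast
      try ring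
    -- partial transpose of the separable decomposition
    have hpt : pt (bondState ω) = ∑ i, (lam i : ℂ) • (σ i ⊗ₖ (τ i)ᵀ) := by
      rw [hρ]
      ext ⟨a, b⟩ ⟨c, d⟩
      simp [pt, Matrix.sum_apply, Matrix.kroneckerMap_apply, Complex.real_smul]
    -- the witness functional is nonnegative on the separable decomposition
    have hnn : 0 ≤ star v ⬝ᵥ (pt (bondState ω) *ᵥ v) := by
      rw [hpt]
      have h1 : ((∑ i, (lam i : ℂ) • (σ i ⊗ₖ (τ i)ᵀ)) *ᵥ v)
          = ∑ i, (((lam i : ℂ) • (σ i ⊗ₖ (τ i)ᵀ)) *ᵥ v) := by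
        ext p
        simp only [Matrix.mulVec, dotProduct, Finset.sum_apply, Matrix.sum_apply,
          Finset.sum_mul]
        exact Finset.sum_comm
      rw [h1]
      have h2 : star v ⬝ᵥ (∑ i, (((lam i : ℂ) • (σ i ⊗ₖ (τ i)ᵀ)) *ᵥ v))
          = ∑ i, star v ⬝ᵥ (((lam i : ℂ) • (σ i ⊗ₖ (τ i)ᵀ)) *ᵥ v) := by
        simp only [dotProduct, Finset.sum_apply, Finset.mul_sum]
        exact Finset.sum_comm
      rw [h2]
      refine Finset.sum_nonneg fun i _ => ?_
      exact (psd_smul (kron_psd (hσ i).2.1 ((hτ i).2.1.transpose)) (hlam0 i)).dotProduct_mulVec_nonneg v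
    rw [hval] at hnn
    have hr : 0 ≤ 1 - 2 * ω - ω ^ 2 := by exact_mod_cast Complex.zero_le_real.mp hnn
    nlinarith [sq_nonneg (ω + 1 - Real.sqrt 2), sq_nonneg (ω + 1 + Real.sqrt 2)]
  · intro hω
    have hr : 0 ≤ 1 - 2 * ω - ω ^ 2 := by
      nlinarith [mul_nonneg (by linarith : (0:ℝ) ≤ Real.sqrt 2 - (ω + 1))
        (by linarith : (0:ℝ) ≤ Real.sqrt 2 + (ω + 1))]
    -- density-matrix facts for the seven product factors
    have pI2 : (!![1/2, 0; 0, (1:ℂ)/2]).PosSemidef := by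
      have h := psd_smul (n := Fin 2) ((outer_psd ![1, 0]).add (outer_psd ![0, 1]))
        (c := 1/2) (by norm_num)
      have e : !![1/2, 0; 0, (1:ℂ)/2]
          = ((1/2 : ℝ) : ℂ) • ((Matrix.of fun i j => ![(1:ℂ),0] i * star (![(1:ℂ),0] j))
            + (Matrix.of fun i j => ![(0:ℂ),1] i * star (![(0:ℂ),1] j))) := by
        ext i j
        fin_cases i <;> fin_cases j <;> norm_num
      rw [e]; exact h
    have pxp : (!![1/2, 1/2; 1/2, (1:ℂ)/2]).PosSemidef := by
      refine psd_of_outer (1/2) (by norm_num) ![1, 1] ?_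
      ext i j; fin_cases i <;> fin_cases j <;> norm_num
    have pxm : (!![1/2, -(1/2); -(1/2), (1:ℂ)/2]).PosSemidef := by
      refine psd_of_outer (1/2) (by norm_num) ![1, -1] ?_
      ext i j; fin_cases i <;> fin_cases j <;> norm_num
    have pzp : (!![1, 0; 0, (0:ℂ)]).PosSemidef := by
      refine psd_of_outer 1 (by norm_num) ![1, 0] ?_
      ext i j; fin_cases i <;> fin_cases j <;> norm_num
    have pzm : (!![0, 0; 0, (1:ℂ)]).PosSemidef := by
      refine psd_of_outer 1 (by norm_num) ![0, 1] ?_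
      ext i j; fin_cases i <;> fin_cases j <;> norm_num
    have pyp : (!![1/2, -(Complex.I/2); Complex.I/2, (1:ℂ)/2]).PosSemidef := by
      refine psd_of_outer (1/2) (by norm_num) ![1, Complex.I] ?_
      ext i j
      fin_cases i <;> fin_cases j <;>
        norm_num [Complex.star_def, Complex.conj_I, Complex.ext_iff]
    have pym : (!![1/2, Complex.I/2; -(Complex.I/2), (1:ℂ)/2]).PosSemidef := by
      refine psd_of_outer (1/2) (by norm_num) ![1, -Complex.I] ?_
      ext i j
      fin_cases i <;> fin_cases j <;>
        norm_num [Complex.star_def, Complex.conj_I, Complex.ext_iff]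
    have tI2 : (!![1/2, 0; 0, (1:ℂ)/2]).trace = 1 := by
      simp [Matrix.trace, Fin.sum_univ_two]; norm_num
    have txp : (!![1/2, 1/2; 1/2, (1:ℂ)/2]).trace = 1 := by
      simp [Matrix.trace, Fin.sum_univ_two]; norm_num
    have txm : (!![1/2, -(1/2); -(1/2), (1:ℂ)/2]).trace = 1 := by
      simp [Matrix.trace, Fin.sum_univ_two]; norm_num
    have tzp : (!![1, 0; 0, (0:ℂ)]).trace = 1 := by
      simp [Matrix.trace, Fin.sum_univ_two]
    have tzm : (!![0, 0; 0, (1:ℂ)]).trace = 1 := by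
      simp [Matrix.trace, Fin.sum_univ_two]
    have typ : (!![1/2, -(Complex.I/2); Complex.I/2, (1:ℂ)/2]).trace = 1 := by
      simp [Matrix.trace, Fin.sum_univ_two]; norm_num
    have tym : (!![1/2, Complex.I/2; -(Complex.I/2), (1:ℂ)/2]).trace = 1 := by
      simp [Matrix.trace, Fin.sum_univ_two]; norm_num
    refine ⟨7, ![1 - 2*ω - ω^2, ω/2, ω/2, ω/2, ω/2, ω^2/2, ω^2/2],
      ![!![1/2, 0; 0, (1:ℂ)/2], !![1/2, 1/2; 1/2, (1:ℂ)/2], !![1/2, -(1/2); -(1/2), (1:ℂ)/2],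
        !![1, 0; 0, (0:ℂ)], !![0, 0; 0, (1:ℂ)],
        !![1/2, -(Complex.I/2); Complex.I/2, (1:ℂ)/2],
        !![1/2, Complex.I/2; -(Complex.I/2), (1:ℂ)/2]],
      ![!![1/2, 0; 0, (1:ℂ)/2], !![1, 0; 0, (0:ℂ)], !![0, 0; 0, (1:ℂ)],
        !![1/2, 1/2; 1/2, (1:ℂ)/2], !![1/2, -(1/2); -(1/2), (1:ℂ)/2],
        !![1/2, -(Complex.I/2); Complex.I/2, (1:ℂ)/2],
        !![1/2, Complex.I/2; -(Complex.I/2), (1:ℂ)/2]],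
      ?_, ?_, ?_, ?_, ?_⟩
    · intro i
      fin_cases i
      · show 0 ≤ 1 - 2*ω - ω^2; linarith
      · show 0 ≤ ω/2; linarith
      · show 0 ≤ ω/2; linarith
      · show 0 ≤ ω/2; linarith
      · show 0 ≤ ω/2; linarith
      · show 0 ≤ ω^2/2; positivity
      · show 0 ≤ ω^2/2; positivity
    · rw [Fin.sum_univ_seven]
      show (1 - 2*ω - ω^2) + ω/2 + ω/2 + ω/2 + ω/2 + ω^2/2 + ω^2/2 = 1
      ring
    · intro i
      fin_cases i
      exacts [⟨pI2.1, pI2, tI2⟩, ⟨pxp.1, pxp, txp⟩, ⟨pxm.1, pxm, txm⟩,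
        ⟨pzp.1, pzp, tzp⟩, ⟨pzm.1, pzm, tzm⟩, ⟨pyp.1, pyp, typ⟩, ⟨pym.1, pym, tym⟩]
    · intro i
      fin_cases i
      exacts [⟨pI2.1, pI2, tI2⟩, ⟨pzp.1, pzp, tzp⟩, ⟨pzm.1, pzm, tzm⟩,
        ⟨pxp.1, pxp, txp⟩, ⟨pxm.1, pxm, txm⟩, ⟨pyp.1, pyp, typ⟩, ⟨pym.1, pym, tym⟩]
    · rw [Fin.sum_univ_seven]
      show bondState ω =
        ((1 - 2*ω - ω^2 : ℝ)) • ((!![1/2, 0; 0, (1:ℂ)/2]) ⊗ₖ (!![1/2, 0; 0, (1:ℂ)/2]))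
        + ((ω/2 : ℝ)) • ((!![1/2, 1/2; 1/2, (1:ℂ)/2]) ⊗ₖ (!![1, 0; 0, (0:ℂ)]))
        + ((ω/2 : ℝ)) • ((!![1/2, -(1/2); -(1/2), (1:ℂ)/2]) ⊗ₖ (!![0, 0; 0, (1:ℂ)]))
        + ((ω/2 : ℝ)) • ((!![1, 0; 0, (0:ℂ)]) ⊗ₖ (!![1/2, 1/2; 1/2, (1:ℂ)/2]))
        + ((ω/2 : ℝ)) • ((!![0, 0; 0, (1:ℂ)]) ⊗ₖ (!![1/2, -(1/2); -(1/2), (1:ℂ)/2]))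
        + ((ω^2/2 : ℝ)) • ((!![1/2, -(Complex.I/2); Complex.I/2, (1:ℂ)/2]) ⊗ₖ
            (!![1/2, -(Complex.I/2); Complex.I/2, (1:ℂ)/2]))
        + ((ω^2/2 : ℝ)) • ((!![1/2, Complex.I/2; -(Complex.I/2), (1:ℂ)/2]) ⊗ₖ
            (!![1/2, Complex.I/2; -(Complex.I/2), (1:ℂ)/2]))
      have eI2 : !![1/2, 0; 0, (1:ℂ)/2] = (2:ℂ)⁻¹ • 1 := by
        ext i j; fin_cases i <;> fin_cases j <;> norm_num [Matrix.one_apply]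
      have exp : !![1/2, 1/2; 1/2, (1:ℂ)/2] = (2:ℂ)⁻¹ • 1 + (2:ℂ)⁻¹ • PX := by
        ext i j; fin_cases i <;> fin_cases j <;> norm_num [Matrix.one_apply, PX]
      have exm : !![1/2, -(1/2); -(1/2), (1:ℂ)/2] = (2:ℂ)⁻¹ • 1 + (-(2:ℂ)⁻¹) • PX := by
        ext i j; fin_cases i <;> fin_cases j <;> norm_num [Matrix.one_apply, PX]
      have ezp : !![1, 0; 0, (0:ℂ)] = (2:ℂ)⁻¹ • 1 + (2:ℂ)⁻¹ • PZ := by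
        ext i j; fin_cases i <;> fin_cases j <;> norm_num [Matrix.one_apply, PZ]
      have ezm : !![0, 0; 0, (1:ℂ)] = (2:ℂ)⁻¹ • 1 + (-(2:ℂ)⁻¹) • PZ := by
        ext i j; fin_cases i <;> fin_cases j <;> norm_num [Matrix.one_apply, PZ]
      have eyp : !![1/2, -(Complex.I/2); Complex.I/2, (1:ℂ)/2]
          = (2:ℂ)⁻¹ • 1 + (2:ℂ)⁻¹ • PY := by
        ext i j; fin_cases i <;> fin_cases j <;>
          (norm_num [Matrix.one_apply, PY]; try ring)
      have eym : !![1/2, Complex.I/2; -(Complex.I/2), (1:ℂ)/2]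
          = (2:ℂ)⁻¹ • 1 + (-(2:ℂ)⁻¹) • PY := by
        ext i j; fin_cases i <;> fin_cases j <;>
          (norm_num [Matrix.one_apply, PY]; try ring)
      rw [bondState_eq, eI2, exp, exm, ezp, ezm, eyp, eym, real_smul_mat, real_smul_mat,
        real_smul_mat, real_smul_mat, real_smul_mat, real_smul_mat, real_smul_mat]
      push_cast
      simp only [Matrix.smul_kronecker, Matrix.kronecker_smul, Matrix.add_kronecker,
        Matrix.kronecker_add, Matrix.one_kronecker_one, smul_smul]
      module

end ClusterState
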